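/- On the punctured plane, consider the ODE Q''(z) = −1/(4Q(z)³) for a holomorphic function Q with initial data Q(0) = Q₀ ≠ 0, Q'(0) = P₀. Then locally Q(z) = √(Q₀² + 2Q₀P₀·z + 2E₀·z²) with E₀ = P₀²/2 − 1/(8Q₀²), where the square root is the holomorphic branch with √(Q₀²) = Q₀. In particular, for Q₀ = 1, P₀ = 1/2 one gets E₀ = 0 and Q(z) = √(z+1), and the two maximal holomorphic extensions of this solution to the plane slit along {Re(z+1) ≤ 0, Im(z+1)=0} and along {Im(z+1) ≤ 0, Re(z+1)=0} respectively have different domains and disagree (by a sign) on the third quadrant {Re(z+1)<0, Im(z+1)<0}, showing maximal holomorphic trajectories with the same initial value need not be unique. -/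

import Mathlib

open Complex Real

private lemma sq_half_cpow {w : ℂ} (hw : w ≠ 0) : (w ^ ((1 : ℂ) / 2)) ^ 2 = w := by
  rw [sq, ← Complex.cpow_add _ _ hw]
  norm_num

private lemma ode_of_sq {U : Set ℂ} (hU : IsOpen U) {Q : ℂ → ℂ} {c0 c1 c2 : ℂ}
    (hQd : DifferentiableOn ℂ Q U)
    (hQ0 : ∀ z ∈ U, Q z ≠ 0)
    (hsq : ∀ z ∈ U, Q z ^ 2 = c0 + c1 * z + c2 * z ^ 2)
    (hdisc : c1 ^ 2 - 4 * c2 * c0 = 1) :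
    ∀ z ∈ U, deriv (deriv Q) z = -1 / (4 * Q z ^ 3) := by
  have hpoly : ∀ z : ℂ, HasDerivAt (fun w => c0 + c1 * w + c2 * w ^ 2) (c1 + 2 * c2 * z) z := by
    intro z
    have h1 : HasDerivAt (fun w : ℂ => c0 + c1 * w + c2 * w ^ 2)
        (0 + c1 * 1 + c2 * (↑2 * z ^ 1)) z :=
      ((hasDerivAt_const z c0).add ((hasDerivAt_id z).const_mul c1)).add
        ((hasDerivAt_pow 2 z).const_mul c2)
    convert h1 using 1
    push_cast
    ring
  have hder : ∀ z ∈ U, deriv Q z = (c1 + 2 * c2 * z) / (2 * Q z) := by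
    intro z hz
    have hQz : HasDerivAt Q (deriv Q z) z :=
      (hQd.differentiableAt (hU.mem_nhds hz)).hasDerivAt
    have h1 : HasDerivAt (fun w => Q w ^ 2) (2 * Q z * deriv Q z) z := by
      have h := hQz.pow 2
      exact h.congr_deriv (by rw [show (2:ℕ) - 1 = 1 from rfl]; push_cast; ring)
    have heq : (fun w => Q w ^ 2) =ᶠ[nhds z] fun w => c0 + c1 * w + c2 * w ^ 2 :=
      Filter.eventually_of_mem (hU.mem_nhds hz) hsq
    have h2 : HasDerivAt (fun w => Q w ^ 2) (c1 + 2 * c2 * z) z :=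
      (hpoly z).congr_of_eventuallyEq heq
    have huniq := h1.unique h2
    rw [eq_div_iff (mul_ne_zero two_ne_zero (hQ0 z hz))]
    linear_combination huniq
  intro z hz
  have hQz : HasDerivAt Q (deriv Q z) z :=
    (hQd.differentiableAt (hU.mem_nhds hz)).hasDerivAt
  have hQzne : Q z ≠ 0 := hQ0 z hz
  have hDeq : deriv Q =ᶠ[nhds z] fun w => (c1 + 2 * c2 * w) / (2 * Q w) :=
    Filter.eventually_of_mem (hU.mem_nhds hz) hder
  have hnum : HasDerivAt (fun w : ℂ => c1 + 2 * c2 * w) (2 * c2) z := by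
    simpa using ((hasDerivAt_id z).const_mul (2 * c2)).const_add c1
  have hden : HasDerivAt (fun w => 2 * Q w) (2 * deriv Q z) z := hQz.const_mul 2
  have hdiv : HasDerivAt (fun w => (c1 + 2 * c2 * w) / (2 * Q w))
      ((2 * c2 * (2 * Q z) - (c1 + 2 * c2 * z) * (2 * deriv Q z)) / (2 * Q z) ^ 2) z :=
    hnum.div hden (mul_ne_zero two_ne_zero hQzne)
  rw [hDeq.deriv_eq, hdiv.deriv, hder z hz]
  have hs := hsq z hz
  field_simp
  linear_combination (16 * c2) * hs + (-4) * hdisc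


private lemma part1 (Q₀ P₀ : ℂ) (hQ₀ : Q₀ ≠ 0) :
    ∃ (U : Set ℂ) (Q : ℂ → ℂ), IsOpen U ∧ (0 : ℂ) ∈ U ∧
      DifferentiableOn ℂ Q U ∧ Q 0 = Q₀ ∧ deriv Q 0 = P₀ ∧
      (∀ z ∈ U, Q z ^ 2 = Q₀ ^ 2 + 2 * Q₀ * P₀ * z
        + 2 * (P₀ ^ 2 / 2 - 1 / (8 * Q₀ ^ 2)) * z ^ 2) ∧
      (∀ z ∈ U, Q z ≠ 0) := by
  set E₀ : ℂ := P₀ ^ 2 / 2 - 1 / (8 * Q₀ ^ 2) with hE₀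
  have hQ₀2 : Q₀ ^ 2 ≠ 0 := pow_ne_zero _ hQ₀
  set g : ℂ → ℂ := fun z => (Q₀ ^ 2 + 2 * Q₀ * P₀ * z + 2 * E₀ * z ^ 2) * (Q₀ ^ 2)⁻¹ with hg
  have hgc : Continuous g := by fun_prop
  have hg0 : g 0 = 1 := by simp [hg, mul_inv_cancel₀ hQ₀2]
  have hgder : ∀ z : ℂ, HasDerivAt g ((2 * Q₀ * P₀ + 4 * E₀ * z) * (Q₀ ^ 2)⁻¹) z := by
    intro z
    have h1 : HasDerivAt (fun w : ℂ => Q₀ ^ 2 + 2 * Q₀ * P₀ * w + 2 * E₀ * w ^ 2)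
        (0 + 2 * Q₀ * P₀ * 1 + 2 * E₀ * (↑2 * z ^ 1)) z :=
      ((hasDerivAt_const z (Q₀ ^ 2)).add ((hasDerivAt_id z).const_mul (2 * Q₀ * P₀))).add
        ((hasDerivAt_pow 2 z).const_mul (2 * E₀))
    have h2 := h1.mul_const ((Q₀ ^ 2)⁻¹)
    exact h2.congr_deriv (by push_cast; ring)
  refine ⟨{z | 0 < (g z).re}, fun z => Q₀ * g z ^ ((1 : ℂ) / 2), ?_, ?_, ?_, ?_, ?_, ?_, ?_⟩
  · exact isOpen_lt continuous_const (Complex.continuous_re.comp hgc)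
  · simp [hg0]
  · intro z hz
    exact (((hgder z).cpow_const (c := (1 : ℂ) / 2) (Or.inl hz)).const_mul Q₀).differentiableAt.differentiableWithinAt
  · simp [hg0, Complex.one_cpow]
  · have h0 : (0 : ℂ) ∈ {z : ℂ | 0 < (g z).re} := by simp [hg0]
    have hd := (((hgder 0).cpow_const (c := (1 : ℂ) / 2) (Or.inl h0)).const_mul Q₀).deriv
    rw [hd, hg0, Complex.one_cpow]
    field_simp
    ring
  · intro z hz
    have hgz : g z ≠ 0 := by
      intro h
      have hz' : 0 < (g z).re := hz
      rw [h] at hz'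
      simp at hz'
    have : (Q₀ * g z ^ ((1 : ℂ) / 2)) ^ 2 = Q₀ ^ 2 * g z := by
      rw [mul_pow, sq_half_cpow hgz]
    rw [this, hg]
    field_simp
  · intro z hz
    have hgz : g z ≠ 0 := by
      intro h
      have hz' : 0 < (g z).re := hz
      rw [h] at hz'
      simp at hz'
    exact mul_ne_zero hQ₀ (by simp [Complex.cpow_eq_zero_iff, hgz])


-- U₂ open
private lemma hU2open : IsOpen {z : ℂ | (z + 1).re ≠ 0 ∨ 0 < (z + 1).im} := by
  have : {z : ℂ | (z + 1).re ≠ 0 ∨ 0 < (z + 1).im}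
      = {z : ℂ | (z + 1).re ≠ 0} ∪ {z : ℂ | 0 < (z + 1).im} := rfl
  rw [this]
  exact (isOpen_ne_fun (by fun_prop) continuous_const).union
    (isOpen_lt continuous_const (by fun_prop))

private lemma hU1open : IsOpen {z : ℂ | 0 < (z + 1).re ∨ (z + 1).im ≠ 0} := by
  have : {z : ℂ | 0 < (z + 1).re ∨ (z + 1).im ≠ 0}
      = {z : ℂ | 0 < (z + 1).re} ∪ {z : ℂ | (z + 1).im ≠ 0} := rfl
  rw [this]
  exact (isOpen_lt continuous_const (by fun_prop)).union
    (isOpen_ne_fun (by fun_prop) continuous_const)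

private lemma q1_hasDeriv {z : ℂ} (hz : 0 < (z + 1).re ∨ (z + 1).im ≠ 0) :
    HasDerivAt (fun z : ℂ => (z + 1) ^ ((1 : ℂ) / 2))
      ((1 : ℂ) / 2 * (z + 1) ^ ((1 : ℂ) / 2 - 1) * 1) z :=
  ((hasDerivAt_id z).add_const 1).cpow_const (c := (1 : ℂ) / 2) hz

private lemma q2_hasDeriv {z : ℂ} (hz : (z + 1).re ≠ 0 ∨ 0 < (z + 1).im) :
    HasDerivAt (fun z : ℂ => ((-I : ℂ) ^ ((1 : ℂ) / 2))⁻¹ * (-I * (z + 1)) ^ ((1 : ℂ) / 2))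
      (((-I : ℂ) ^ ((1 : ℂ) / 2))⁻¹ *
        ((1 : ℂ) / 2 * (-I * (z + 1)) ^ ((1 : ℂ) / 2 - 1) * -I)) z := by
  have hslit : (-I * (z + 1)) ∈ slitPlane := by
    rw [mem_slitPlane_iff]
    simp only [Complex.mul_re, Complex.mul_im, Complex.neg_re, Complex.neg_im,
      Complex.I_re, Complex.I_im]
    ring_nf
    rcases hz with h | h
    · exact Or.inr (by simpa [add_comm] using neg_ne_zero.mpr h)
    · exact Or.inl (by simpa [add_comm] using h)
  have hin : HasDerivAt (fun z : ℂ => -I * (z + 1)) (-I) z := by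
    simpa using ((hasDerivAt_id z).add_const 1).const_mul (-I)
  exact (hin.cpow_const (c := (1 : ℂ) / 2) hslit).const_mul _

private lemma hnI' : (-I : ℂ) ≠ 0 := by simpa using I_ne_zero

private lemma hr' : ((-I : ℂ) ^ ((1 : ℂ) / 2)) ≠ 0 := by
  simp [Complex.cpow_eq_zero_iff, hnI']

private lemma hc2' : (((-I : ℂ) ^ ((1 : ℂ) / 2))⁻¹) ^ 2 = I := by
  rw [inv_pow, sq_half_cpow hnI', inv_neg, Complex.inv_I, neg_neg]

private lemma third_quadrant {z : ℂ} (hre : (z + 1).re < 0) (him : (z + 1).im < 0) :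
    ((-I : ℂ) ^ ((1 : ℂ) / 2))⁻¹ * (-I * (z + 1)) ^ ((1 : ℂ) / 2)
      = -((z + 1) ^ ((1 : ℂ) / 2)) := by
  set w : ℂ := z + 1 with hw
  have hw0 : w ≠ 0 := fun h => by rw [h] at hre; simp at hre
  have hIw0 : -I * w ≠ 0 := mul_ne_zero hnI' hw0
  set a : ℂ := w ^ ((1 : ℂ) / 2) with ha
  set b : ℂ := ((-I : ℂ) ^ ((1 : ℂ) / 2))⁻¹ * (-I * w) ^ ((1 : ℂ) / 2) with hb
  have hsqe : b ^ 2 = a ^ 2 := by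
    rw [hb, ha, mul_pow, hc2', sq_half_cpow hIw0, sq_half_cpow hw0]
    rw [show (I : ℂ) * (-I * w) = w by rw [← mul_assoc]; simp [Complex.I_mul_I]]
  have harg2 : arg w < -(π / 2) := by
    by_contra h
    push_neg at h
    rcases Complex.neg_pi_div_two_le_arg_iff.mp h with h' | h' <;> linarith
  have ha_re : 0 < a.re := by
    rw [ha, Complex.cpow_def_of_ne_zero hw0, Complex.exp_re]
    have him2 : (Complex.log w * ((1 : ℂ) / 2)).im = w.arg / 2 := by
      simp [Complex.mul_im, Complex.log_im, Complex.log_re]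
      ring
    rw [him2]
    refine mul_pos (Real.exp_pos _) (Real.cos_pos_of_mem_Ioo ⟨?_, ?_⟩)
    · have := Complex.neg_pi_lt_arg w
      linarith
    · linarith [Real.pi_pos]
  have hb_re : b.re < 0 := by
    have h1 : ((-I : ℂ) ^ ((1 : ℂ) / 2))⁻¹ = Complex.exp ((Real.pi : ℂ) / 4 * I) := by
      rw [Complex.cpow_def_of_ne_zero hnI' _, Complex.log_neg_I, ← Complex.exp_neg]
      congr 1
      ring
    have h2 : (-I * w) ^ ((1 : ℂ) / 2) = Complex.exp (Complex.log (-I * w) * ((1 : ℂ) / 2)) :=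
      Complex.cpow_def_of_ne_zero hIw0 _
    rw [hb, h1, h2, ← Complex.exp_add, Complex.exp_re]
    have hre' : (-I * w).re = w.im := by simp [Complex.mul_re]
    have him' : (-I * w).im = -w.re := by simp [Complex.mul_im]
    have harglb : π / 2 < arg (-I * w) := by
      by_contra h
      push_neg at h
      rcases Complex.arg_le_pi_div_two_iff.mp h with h' | h'
      · rw [hre'] at h'; linarith
      · rw [him'] at h'; linarith
    have hargub := Complex.arg_le_pi (-I * w)
    have him3 : ((Real.pi : ℂ) / 4 * I + Complex.log (-I * w) * ((1 : ℂ) / 2)).im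
        = π / 4 + (-I * w).arg / 2 := by
      simp [Complex.add_im, Complex.mul_im, Complex.log_im, Complex.log_re]
      ring
    rw [him3]
    refine mul_neg_of_pos_of_neg (Real.exp_pos _) (Real.cos_neg_of_pi_div_two_lt_of_lt ?_ ?_)
    · linarith
    · linarith [Real.pi_pos]
  have hne : b ≠ a := fun h => by rw [h] at hb_re; linarith
  have hfac : (b - a) * (b + a) = 0 := by linear_combination hsqe
  rcases mul_eq_zero.mp hfac with h | h
  · exact absurd (sub_eq_zero.mp h) hne
  · exact eq_neg_of_add_eq_zero_left h


/-- For the holomorphic ODE `Q'' = -1/(4Q³)` with `Q(0) = Q₀ ≠ 0`,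
`Q'(0) = P₀`, locally `Q(z)² = Q₀² + 2Q₀P₀·z + 2E₀·z²` with
`E₀ = P₀²/2 - 1/(8Q₀²)` (the square root branch with `√(Q₀²) = Q₀`).
For `Q₀ = 1`, `P₀ = 1/2` one has `E₀ = 0` and `Q(z) = √(z+1)`; the two maximal
holomorphic extensions `Q₁` (principal branch, on the plane slit along
`{Re(z+1) ≤ 0, Im(z+1) = 0}`) and `Q₂` (branch on the plane slit along
`{Im(z+1) ≤ 0, Re(z+1) = 0}`) have different domains and satisfy `Q₂ = -Q₁` on
the third quadrant `{Re(z+1) < 0, Im(z+1) < 0}`: maximal holomorphic trajectories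
with the same initial value need not be unique. -/
theorem stmt_16 :
    (∀ Q₀ P₀ : ℂ, Q₀ ≠ 0 → ∃ (U : Set ℂ) (Q : ℂ → ℂ), IsOpen U ∧ (0 : ℂ) ∈ U ∧
      DifferentiableOn ℂ Q U ∧ Q 0 = Q₀ ∧ deriv Q 0 = P₀ ∧
      (∀ z ∈ U, deriv (deriv Q) z = -1 / (4 * Q z ^ 3)) ∧
      (∀ z ∈ U, Q z ^ 2 = Q₀ ^ 2 + 2 * Q₀ * P₀ * z
        + 2 * (P₀ ^ 2 / 2 - 1 / (8 * Q₀ ^ 2)) * z ^ 2)) ∧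
    (let U₁ : Set ℂ := {z | 0 < (z + 1).re ∨ (z + 1).im ≠ 0}
     let U₂ : Set ℂ := {z | (z + 1).re ≠ 0 ∨ 0 < (z + 1).im}
     let Q₁ : ℂ → ℂ := fun z => (z + 1) ^ ((1 : ℂ) / 2)
     DifferentiableOn ℂ Q₁ U₁ ∧ (∀ z ∈ U₁, Q₁ z ^ 2 = z + 1) ∧ Q₁ 0 = 1 ∧
     deriv Q₁ 0 = 1 / 2 ∧
     (∀ z ∈ U₁, deriv (deriv Q₁) z = -1 / (4 * Q₁ z ^ 3)) ∧
     U₁ ≠ U₂ ∧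
     ∃ Q₂ : ℂ → ℂ, DifferentiableOn ℂ Q₂ U₂ ∧ (∀ z ∈ U₂, Q₂ z ^ 2 = z + 1) ∧
       Q₂ 0 = 1 ∧ deriv Q₂ 0 = 1 / 2 ∧
       (∀ z ∈ U₂, deriv (deriv Q₂) z = -1 / (4 * Q₂ z ^ 3)) ∧
       (∀ z : ℂ, (z + 1).re < 0 → (z + 1).im < 0 → Q₂ z = -Q₁ z)) := by
  constructor
  · intro Q₀ P₀ hQ₀
    obtain ⟨U, Q, hUopen, hU0, hQd, hQ0, hQP, hsq, hQne⟩ := part1 Q₀ P₀ hQ₀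
    refine ⟨U, Q, hUopen, hU0, hQd, hQ0, hQP, ?_, hsq⟩
    exact ode_of_sq (c0 := Q₀ ^ 2) (c1 := 2 * Q₀ * P₀)
      (c2 := 2 * (P₀ ^ 2 / 2 - 1 / (8 * Q₀ ^ 2))) hUopen hQd hQne hsq
      (by field_simp; ring)
  · intro U₁ U₂ Q₁
    have hU1mem : ∀ z ∈ U₁, (z + 1) ∈ slitPlane := fun z hz => mem_slitPlane_iff.mpr hz
    have hU1ne : ∀ z ∈ U₁, z + 1 ≠ 0 := fun z hz => slitPlane_ne_zero (hU1mem z hz)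
    have hQ1d : DifferentiableOn ℂ Q₁ U₁ := fun z hz =>
      (q1_hasDeriv hz).differentiableAt.differentiableWithinAt
    have hQ1sq : ∀ z ∈ U₁, Q₁ z ^ 2 = z + 1 := fun z hz => sq_half_cpow (hU1ne z hz)
    have hQ1ne : ∀ z ∈ U₁, Q₁ z ≠ 0 := by
      intro z hz h
      have := hQ1sq z hz
      rw [h] at this
      exact hU1ne z hz (by simpa using this.symm)
    have h0U1 : (0 : ℂ) ∈ U₁ := by
      show 0 < ((0 : ℂ) + 1).re ∨ ((0 : ℂ) + 1).im ≠ 0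
      norm_num
    refine ⟨hQ1d, hQ1sq, by simp [Q₁], ?_, ?_, ?_, ?_⟩
    · have hd := (q1_hasDeriv h0U1).deriv
      rw [show Q₁ = fun z : ℂ => (z + 1) ^ ((1 : ℂ) / 2) from rfl, hd]
      norm_num
    · have := ode_of_sq (c0 := 1) (c1 := 1) (c2 := 0) hU1open hQ1d hQ1ne
        (by intro z hz; rw [hQ1sq z hz]; ring) (by norm_num)
      exact this
    · intro h
      have h2 : (-2 : ℂ) ∈ U₂ := by
        show ((-2 : ℂ) + 1).re ≠ 0 ∨ 0 < ((-2 : ℂ) + 1).im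
        norm_num
      rw [← h] at h2
      have h2' : 0 < ((-2 : ℂ) + 1).re ∨ ((-2 : ℂ) + 1).im ≠ 0 := h2
      norm_num at h2'
    · set Q₂ : ℂ → ℂ := fun z => ((-I : ℂ) ^ ((1 : ℂ) / 2))⁻¹ * (-I * (z + 1)) ^ ((1 : ℂ) / 2)
        with hQ₂def
      have hU2ne : ∀ z ∈ U₂, z + 1 ≠ 0 := by
        intro z hz h
        rcases hz with h' | h' <;> rw [h] at h' <;> simp at h'
      have hQ2d : DifferentiableOn ℂ Q₂ U₂ := fun z hz =>
        (q2_hasDeriv hz).differentiableAt.differentiableWithinAt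
      have hQ2sq : ∀ z ∈ U₂, Q₂ z ^ 2 = z + 1 := by
        intro z hz
        have hne : -I * (z + 1) ≠ 0 := mul_ne_zero hnI' (hU2ne z hz)
        rw [hQ₂def]
        simp only []
        rw [mul_pow, hc2', sq_half_cpow hne, ← mul_assoc]
        simp [Complex.I_mul_I]
      have hQ2ne : ∀ z ∈ U₂, Q₂ z ≠ 0 := by
        intro z hz h
        have := hQ2sq z hz
        rw [h] at this
        exact hU2ne z hz (by simpa using this.symm)
      have h0U2 : (0 : ℂ) ∈ U₂ := by
        show ((0 : ℂ) + 1).re ≠ 0 ∨ 0 < ((0 : ℂ) + 1).im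
        norm_num
      refine ⟨Q₂, hQ2d, hQ2sq, ?_, ?_, ?_, ?_⟩
      · show ((-I : ℂ) ^ ((1 : ℂ) / 2))⁻¹ * (-I * ((0 : ℂ) + 1)) ^ ((1 : ℂ) / 2) = 1
        rw [show -I * ((0 : ℂ) + 1) = -I by ring]
        exact inv_mul_cancel₀ hr'
      · have hd := (q2_hasDeriv h0U2).deriv
        rw [hQ₂def, hd]
        rw [show -I * ((0 : ℂ) + 1) = -I by ring]
        rw [Complex.cpow_sub _ _ hnI', Complex.cpow_one]
        field_simp
      · have := ode_of_sq (c0 := 1) (c1 := 1) (c2 := 0) hU2open hQ2d hQ2ne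
          (by intro z hz; rw [hQ2sq z hz]; ring) (by norm_num)
        exact this
      · intro z hre him
        rw [hQ₂def]
        exact third_quadrant hre him
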